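/- The pre-abstraction 𝔣(V) = {(C,D) ∈ 𝓒 | CD^ω ∩ V ≠ ∅} and pre-concretization 𝔤(𝒱) = ⋃_{(C,D)∈𝒱} CD^ω form a Galois connection between (𝒫(Σ^{≤ω}), ⊆) and (𝒫(𝓒), ⊆) after composing with the closure operator: for every language V and closed set 𝒱, 𝔠(𝔣(V)) ⊆ 𝒱 iff V ⊆ 𝔤(𝒱), where 𝔠(𝒱) = ⋃_{n≥1}(𝔣∘𝔤)ⁿ(𝒱) is the least closed superset. -/

import Mathlib

variable {Q : Type*} {A : Type*}

/-- Reachability in a nondeterministic automaton: `q` is reachable from `p` reading `w`. -/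
def Reach (δ : Q → A → Set Q) : Q → List A → Q → Prop
  | p, [], q => p = q
  | p, a :: w, q => ∃ r ∈ δ p a, Reach δ r w q

/-- Reachability visiting some final state along the way (possibly the endpoints). -/
def ReachF (δ : Q → A → Set Q) (Fs : Set Q) (p : Q) (w : List A) (q : Q) : Prop :=
  ∃ u v r, w = u ++ v ∧ r ∈ Fs ∧ Reach δ p u r ∧ Reach δ r v q

/-- The relation ∼ : `w ∼ u` iff for all states `p q`, reachability and
reachability-through-final-states via `w` and via `u` coincide. -/
def Sim (δ : Q → A → Set Q) (Fs : Set Q) (w u : List A) : Prop :=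
  ∀ p q : Q, (Reach δ p w q ↔ Reach δ p u q) ∧ (ReachF δ Fs p w q ↔ ReachF δ Fs p u q)

/-- The class of a word in 𝒬 = Σ⁺/∼ ⊎ {[ε]} : for a nonempty word its ∼-class,
and `[ε] = {ε}` for the empty word. -/
def wordClass (δ : Q → A → Set Q) (Fs : Set Q) (w : List A) : Set (List A) :=
  {u | (w = [] ∧ u = []) ∨ (w ≠ [] ∧ u ≠ [] ∧ Sim δ Fs w u)}

/-- `C` is an element of 𝒬. -/
def IsClass (δ : Q → A → Set Q) (Fs : Set Q) (C : Set (List A)) : Prop :=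
  ∃ w : List A, C = wordClass δ Fs w

/-- Elementwise concatenation of languages of finite words. -/
def mulSet (L M : Set (List A)) : Set (List A) := Set.image2 (· ++ ·) L M

/-- Monoid multiplication of classes: the class of the concatenation of representatives. -/
def classMul (δ : Q → A → Set Q) (Fs : Set Q) (C D : Set (List A)) : Set (List A) :=
  {v | ∃ w ∈ C, ∃ u ∈ D, v ∈ wordClass δ Fs (w ++ u)}

/-- Finite star of a language. -/
def starSet (L : Set (List A)) : Set (List A) :=
  {w | ∃ l : List (List A), (∀ u ∈ l, u ∈ L) ∧ w = l.flatten}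

/-- Possibly infinite words over `A` : Σ^{≤ω}, as stable `Option`-valued streams. -/
def Word (A : Type*) : Type _ := {g : ℕ → Option A // ∀ n, g n = none → g (n + 1) = none}

/-- A finite word as an element of Σ^{≤ω}. -/
def ofList (w : List A) : Word A :=
  ⟨fun n => w[n]?, fun n h => by
    rw [List.getElem?_eq_none_iff] at *
    omega⟩

/-- An infinite word as an element of Σ^{≤ω}. -/
def ofStream (s : ℕ → A) : Word A := ⟨fun n => some (s n), fun n h => by simp at h⟩

/- The (possibly infinite) concatenation `f 0 · f 1 · f 2 ⋯` of a sequence of finite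
words, as an element of Σ^{≤ω}. -/
open Classical in
noncomputable def prodWord (f : ℕ → List A) : Word A :=
  ⟨fun n =>
    if h : ∃ k, n < ((List.range k).flatMap f).length then
      ((List.range h.choose).flatMap f)[n]?
    else none, by
    intro n hn
    dsimp only at hn ⊢
    by_cases h : ∃ k, n < ((List.range k).flatMap f).length
    · exfalso
      rw [dif_pos h, List.getElem?_eq_none_iff] at hn
      have := h.choose_spec
      omega
    · have h2 : ¬ ∃ k, n + 1 < ((List.range k).flatMap f).length := by
        push_neg at h ⊢
        intro k
        have := h k
        omega
      rw [dif_neg h2]⟩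

/-- Concatenation of a finite word with a possibly infinite word. -/
def catWord (u : List A) (w : Word A) : Word A :=
  ⟨fun n => if n < u.length then u[n]? else w.1 (n - u.length), by
    intro n hn
    dsimp only at hn ⊢
    by_cases h : n < u.length
    · exfalso
      rw [if_pos h, List.getElem?_eq_none_iff] at hn
      omega
    · rw [if_neg h] at hn
      have h2 : ¬ n + 1 < u.length := by omega
      rw [if_neg h2]
      have h3 : n + 1 - u.length = (n - u.length) + 1 := by omega
      rw [h3]
      exact w.2 _ hn⟩

/-- `CD^ω` : all words `w₀w₁w₂⋯` with `w₀ ∈ C` and `wᵢ ∈ D` for `i ≥ 1`. -/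
def omegaProd (C D : Set (List A)) : Set (Word A) :=
  {w | ∃ f : ℕ → List A, f 0 ∈ C ∧ (∀ i, 1 ≤ i → f i ∈ D) ∧ w = prodWord f}

/-- `L^ω` : all words `w₁w₂w₃⋯` with all `wᵢ ∈ L`. -/
def omegaPow (L : Set (List A)) : Set (Word A) :=
  {w | ∃ f : ℕ → List A, (∀ i, f i ∈ L) ∧ w = prodWord f}

/-- Acceptance of a finite word (as an NFA). -/
def NFAAccepts (δ : Q → A → Set Q) (q0 : Q) (Fs : Set Q) (w : List A) : Prop :=
  ∃ q ∈ Fs, Reach δ q0 w q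

/-- Büchi acceptance of an infinite word: a run from `q0` visiting `Fs` infinitely often. -/
def BuchiAccepts (δ : Q → A → Set Q) (q0 : Q) (Fs : Set Q) (s : ℕ → A) : Prop :=
  ∃ r : ℕ → Q, r 0 = q0 ∧ (∀ n, r (n + 1) ∈ δ (r n) (s n)) ∧ {n | r n ∈ Fs}.Infinite

/-- The language `L(𝔄) ⊆ Σ^{≤ω}` of the extended Büchi automaton: finite words accepted
as an NFA together with infinite words accepted as a Büchi automaton. -/
def LangOf (δ : Q → A → Set Q) (q0 : Q) (Fs : Set Q) : Set (Word A) :=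
  {w | (∃ l : List A, w = ofList l ∧ NFAAccepts δ q0 Fs l) ∨
       (∃ s : ℕ → A, w = ofStream s ∧ BuchiAccepts δ q0 Fs s)}

/-- The set 𝒬 of classes, as a type. -/
def QClass (δ : Q → A → Set Q) (Fs : Set Q) : Type _ := {C : Set (List A) // IsClass δ Fs C}

/-- The set 𝓒 of pairs `(C, D)` of classes with `CD = C` and `DD = D`, as a type. -/
def CPair (δ : Q → A → Set Q) (Fs : Set Q) : Type _ :=
  {p : Set (List A) × Set (List A) //
    IsClass δ Fs p.1 ∧ IsClass δ Fs p.2 ∧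
    classMul δ Fs p.1 p.2 = p.1 ∧ classMul δ Fs p.2 p.2 = p.2}

/-- The language `CD^ω` denoted by an element of 𝓒. -/
def concPair {δ : Q → A → Set Q} {Fs : Set Q} (p : CPair δ Fs) : Set (Word A) :=
  omegaProd p.1.1 p.1.2

/-- A subset 𝒱 ⊆ 𝓒 is closed: whenever `UV^ω ∩ CD^ω ≠ ∅` for `(C,D) ∈ 𝒱` and
`(U,V) ∈ 𝓒`, then `(U,V) ∈ 𝒱`. -/
def IsClosedC {δ : Q → A → Set Q} {Fs : Set Q} (𝒱 : Set (CPair δ Fs)) : Prop :=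
  ∀ p ∈ 𝒱, ∀ q : CPair δ Fs, (concPair q ∩ concPair p).Nonempty → q ∈ 𝒱

/-- Pre-abstraction 𝔣. -/
def frakF (δ : Q → A → Set Q) (Fs : Set Q) (V : Set (Word A)) : Set (CPair δ Fs) :=
  {p | (concPair p ∩ V).Nonempty}

/-- Pre-concretization 𝔤. -/
def frakG {δ : Q → A → Set Q} {Fs : Set Q} (𝒱 : Set (CPair δ Fs)) : Set (Word A) :=
  ⋃ p ∈ 𝒱, concPair p

/-- Closure 𝔠(𝒱) = ⋃_{n ≥ 1} (𝔣 ∘ 𝔤)ⁿ(𝒱). -/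
def frakC {δ : Q → A → Set Q} {Fs : Set Q} (𝒱 : Set (CPair δ Fs)) : Set (CPair δ Fs) :=
  ⋃ n : ℕ, (fun 𝒲 => frakF δ Fs (frakG 𝒲))^[n + 1] 𝒱

/-- Abstraction α_* -/
def alphaStar (δ : Q → A → Set Q) (Fs : Set Q) (U : Set (List A)) : Set (QClass δ Fs) :=
  {C | (C.1 ∩ U).Nonempty}

/-- Concretization γ_* -/
def gammaStar {δ : Q → A → Set Q} {Fs : Set Q} (𝒰 : Set (QClass δ Fs)) : Set (List A) :=
  ⋃ C ∈ 𝒰, C.1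

/-- Abstraction α_{≤ω}. -/
def alphaOmega (δ : Q → A → Set Q) (Fs : Set Q) (V : Set (Word A)) : Set (CPair δ Fs) :=
  frakC (frakF δ Fs V)

/-- Concretization γ_{≤ω}. -/
def gammaOmega {δ : Q → A → Set Q} {Fs : Set Q} (𝒱 : Set (CPair δ Fs)) : Set (Word A) :=
  frakG 𝒱

/-! ### Auxiliary lemmas -/

section AuxProofs

open List

lemma reach_append (δ : Q → A → Set Q) (w u : List A) (p q : Q) :
    Reach δ p (w ++ u) q ↔ ∃ r, Reach δ p w r ∧ Reach δ r u q := by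
  induction w generalizing p with
  | nil => simp [Reach]
  | cons a w ih =>
    simp only [List.cons_append, Reach]
    constructor
    · rintro ⟨r, hr, h⟩
      obtain ⟨r', h1, h2⟩ := (ih r).1 h
      exact ⟨r', ⟨r, hr, h1⟩, h2⟩
    · rintro ⟨r', ⟨r, hr, h1⟩, h2⟩
      exact ⟨r, hr, (ih r).2 ⟨r', h1, h2⟩⟩

lemma reachF_append (δ : Q → A → Set Q) (Fs : Set Q) (w u : List A) (p q : Q) :
    ReachF δ Fs p (w ++ u) q ↔
      ∃ r, (ReachF δ Fs p w r ∧ Reach δ r u q) ∨ (Reach δ p w r ∧ ReachF δ Fs r u q) := by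
  constructor
  · rintro ⟨a, b, r0, hab, hr0, h1, h2⟩
    rcases List.append_eq_append_iff.1 hab with ⟨a', ha, hu⟩ | ⟨c', hw, hb⟩
    · rw [ha] at h1
      obtain ⟨r, hpw, ha'⟩ := (reach_append δ w a' p r0).1 h1
      exact ⟨r, Or.inr ⟨hpw, ⟨a', b, r0, hu, hr0, ha', h2⟩⟩⟩
    · rw [hb] at h2
      obtain ⟨r, hc, hu'⟩ := (reach_append δ c' u r0 q).1 h2
      exact ⟨r, Or.inl ⟨⟨a, c', r0, hw, hr0, h1, hc⟩, hu'⟩⟩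
  · rintro ⟨r, ⟨⟨a, b, r0, hw, hr0, h1, h2⟩, h3⟩ | ⟨h1, ⟨a, b, r0, hu, hr0, h2, h3⟩⟩⟩
    · exact ⟨a, b ++ u, r0, by rw [hw, List.append_assoc], hr0, h1,
        (reach_append δ b u r0 q).2 ⟨r, h2, h3⟩⟩
    · exact ⟨w ++ a, b, r0, by rw [hu, List.append_assoc], hr0,
        (reach_append δ w a p r0).2 ⟨r, h1, h2⟩, h3⟩

lemma sim_refl (δ : Q → A → Set Q) (Fs : Set Q) (w : List A) : Sim δ Fs w w :=
  fun _ _ => ⟨Iff.rfl, Iff.rfl⟩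

lemma sim_symm {δ : Q → A → Set Q} {Fs : Set Q} {w u : List A} (h : Sim δ Fs w u) :
    Sim δ Fs u w := fun p q => ⟨(h p q).1.symm, (h p q).2.symm⟩

lemma sim_trans {δ : Q → A → Set Q} {Fs : Set Q} {w u v : List A}
    (h1 : Sim δ Fs w u) (h2 : Sim δ Fs u v) : Sim δ Fs w v :=
  fun p q => ⟨(h1 p q).1.trans (h2 p q).1, (h1 p q).2.trans (h2 p q).2⟩

lemma sim_append {δ : Q → A → Set Q} {Fs : Set Q} {w w' u u' : List A}
    (h1 : Sim δ Fs w w') (h2 : Sim δ Fs u u') : Sim δ Fs (w ++ u) (w' ++ u') := by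
  intro p q
  constructor
  · rw [reach_append, reach_append]
    exact exists_congr fun r => and_congr (h1 p r).1 (h2 r q).1
  · rw [reachF_append, reachF_append]
    exact exists_congr fun r =>
      or_congr (and_congr (h1 p r).2 (h2 r q).1) (and_congr (h1 p r).1 (h2 r q).2)

lemma mem_wordClass_self (δ : Q → A → Set Q) (Fs : Set Q) (w : List A) :
    w ∈ wordClass δ Fs w := by
  by_cases h : w = []
  · exact Or.inl ⟨h, h⟩
  · exact Or.inr ⟨h, h, sim_refl δ Fs w⟩

lemma wordClass_eq_of_mem {δ : Q → A → Set Q} {Fs : Set Q} {w u : List A}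
    (h : u ∈ wordClass δ Fs w) : wordClass δ Fs u = wordClass δ Fs w := by
  rcases h with ⟨hw, hu⟩ | ⟨hw, hu, hsim⟩
  · subst hw; subst hu; rfl
  · ext v
    constructor
    · rintro (⟨h1, h2⟩ | ⟨h1, h2, h3⟩)
      · exact absurd h1 hu
      · exact Or.inr ⟨hw, h2, sim_trans hsim h3⟩
    · rintro (⟨h1, h2⟩ | ⟨h1, h2, h3⟩)
      · exact absurd h1 hw
      · exact Or.inr ⟨hu, h2, sim_trans (sim_symm hsim) h3⟩

lemma classMul_wordClass (δ : Q → A → Set Q) (Fs : Set Q) (w u : List A) :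
    classMul δ Fs (wordClass δ Fs w) (wordClass δ Fs u) = wordClass δ Fs (w ++ u) := by
  ext v
  constructor
  · rintro ⟨a, ha, b, hb, hv⟩
    have hkey : a ++ b ∈ wordClass δ Fs (w ++ u) := by
      rcases ha with ⟨hw, ha⟩ | ⟨hw, ha, hsw⟩ <;> rcases hb with ⟨hu2, hb⟩ | ⟨hu2, hb, hsu⟩
      · subst hw; subst ha; subst hu2; subst hb; exact mem_wordClass_self _ _ _
      · subst hw; subst ha
        simp only [List.nil_append]
        exact Or.inr ⟨hu2, hb, hsu⟩
      · subst hu2; subst hb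
        simp only [List.append_nil]
        exact Or.inr ⟨hw, ha, hsw⟩
      · exact Or.inr ⟨fun hc => hw (List.append_eq_nil_iff.1 hc).1,
          fun hc => ha (List.append_eq_nil_iff.1 hc).1, sim_append hsw hsu⟩
    rwa [wordClass_eq_of_mem hkey] at hv
  · intro hv
    exact ⟨w, mem_wordClass_self δ Fs w, u, mem_wordClass_self δ Fs u, hv⟩

/-- The "color" of a finite word: its Reach and ReachF relations. This determines
its `Sim`-class and lives in a finite type whenever `Q` is finite. -/
def colorOf (δ : Q → A → Set Q) (Fs : Set Q) (w : List A) : (Q → Q → Prop) × (Q → Q → Prop) :=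
  (fun p q => Reach δ p w q, fun p q => ReachF δ Fs p w q)

lemma sim_of_colorOf_eq {δ : Q → A → Set Q} {Fs : Set Q} {w u : List A}
    (h : colorOf δ Fs w = colorOf δ Fs u) : Sim δ Fs w u := by
  intro p q
  exact ⟨iff_of_eq (congrFun (congrFun (congrArg Prod.fst h) p) q),
    iff_of_eq (congrFun (congrFun (congrArg Prod.snd h) p) q)⟩

lemma infinite_fiber {K : Type*} [Finite K] {S : Set ℕ} (hS : S.Infinite) (g : ℕ → K) :
    ∃ k, {x | x ∈ S ∧ g x = k}.Infinite := by
  by_contra hcon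
  push_neg at hcon
  exact hS ((Set.finite_iUnion hcon).subset fun x hx => Set.mem_iUnion.2 ⟨g x, hx, rfl⟩)

/-- Infinite Ramsey theorem for pairs, with finitely many colors. -/
lemma ramsey_pairs {K : Type*} [Finite K] (c : ℕ → ℕ → K) :
    ∃ t : ℕ → ℕ, StrictMono t ∧ ∃ e, ∀ i j, i < j → c (t i) (t j) = e := by
  classical
  have step_ex : ∀ t : {p : ℕ × Set ℕ // p.2.Infinite ∧ ∀ y ∈ p.2, p.1 < y},
      ∃ t' : {p : ℕ × Set ℕ // p.2.Infinite ∧ ∀ y ∈ p.2, p.1 < y},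
        t'.1.1 ∈ t.1.2 ∧ t'.1.2 ⊆ t.1.2 ∧
        ∀ y ∈ t'.1.2, c t.1.1 y = c t.1.1 t'.1.1 := by
    rintro ⟨⟨x, S⟩, hS, hlt⟩
    obtain ⟨k, hk⟩ := infinite_fiber hS (c x)
    obtain ⟨x', hx'⟩ := hk.nonempty
    have hinf : {y | (y ∈ S ∧ c x y = k) ∧ x' < y}.Infinite := by
      apply (hk.diff (Set.finite_Iic x')).mono
      rintro y ⟨hy1, hy2⟩
      exact ⟨hy1, by simpa using hy2⟩
    exact ⟨⟨(x', {y | (y ∈ S ∧ c x y = k) ∧ x' < y}), hinf, fun y hy => hy.2⟩,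
      hx'.1, fun y hy => hy.1.1, fun y hy => by rw [hy.1.2, hx'.2]⟩
  let seq : ℕ → {p : ℕ × Set ℕ // p.2.Infinite ∧ ∀ y ∈ p.2, p.1 < y} :=
    fun n => Nat.rec ⟨(0, Set.Ioi 0), Set.Ioi_infinite 0, fun y hy => hy⟩
      (fun _ t => (step_ex t).choose) n
  have hspec : ∀ n, (seq (n+1)).1.1 ∈ (seq n).1.2 ∧ (seq (n+1)).1.2 ⊆ (seq n).1.2 ∧
      ∀ y ∈ (seq (n+1)).1.2, c (seq n).1.1 y = c (seq n).1.1 (seq (n+1)).1.1 :=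
    fun n => (step_ex (seq n)).choose_spec
  set f : ℕ → ℕ := fun n => (seq n).1.1 with hf
  have hmono : StrictMono f := strictMono_nat_of_lt_succ fun n => (seq n).2.2 _ (hspec n).1
  have hsub : ∀ n m, n ≤ m → (seq m).1.2 ⊆ (seq n).1.2 := by
    intro n m h
    induction h with
    | refl => exact fun _ h => h
    | step h ih => exact Set.Subset.trans (hspec _).2.1 ih
  have hmem : ∀ n m, n < m → f m ∈ (seq n).1.2 := by
    intro n m h
    obtain ⟨m, rfl⟩ : ∃ m', m = m' + 1 := ⟨m - 1, by omega⟩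
    exact hsub n m (by omega) (hspec m).1
  have hcolor : ∀ n m, n < m → c (f n) (f m) = c (f n) (f (n+1)) := by
    intro n m h
    by_cases hm : m = n + 1
    · subst hm; rfl
    · exact (hspec n).2.2 _ (hmem (n+1) m (by omega))
  obtain ⟨e, he⟩ := infinite_fiber (Set.infinite_univ (α := ℕ))
    (fun n => c (f n) (f (n+1)))
  haveI : Infinite ({x | x ∈ Set.univ ∧ c (f x) (f (x+1)) = e} : Set ℕ) := he.to_subtype
  let emb := Nat.orderEmbeddingOfSet {x | x ∈ Set.univ ∧ c (f x) (f (x+1)) = e}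
  refine ⟨f ∘ emb, hmono.comp emb.strictMono, e, fun i j hij => ?_⟩
  have hi : emb i ∈ {x | x ∈ Set.univ ∧ c (f x) (f (x+1)) = e} := by
    rw [← Nat.orderEmbeddingOfSet_range {x | x ∈ Set.univ ∧ c (f x) (f (x+1)) = e}]
    exact ⟨i, rfl⟩
  have := hcolor (emb i) (emb j) (emb.strictMono hij)
  simpa [Function.comp, this] using hi.2

/-- The finite factor `s i s (i+1) ⋯ s (j-1)` of an infinite word. -/
def wSlice (s : ℕ → A) (i j : ℕ) : List A := (List.range (j - i)).map fun n => s (i + n)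

lemma wSlice_length (s : ℕ → A) (i j : ℕ) : (wSlice s i j).length = j - i := by
  simp [wSlice]

lemma wSlice_ne_nil {s : ℕ → A} {i j : ℕ} (h : i < j) : wSlice s i j ≠ [] := by
  intro hcon
  have := congrArg List.length hcon
  rw [wSlice_length] at this
  simp at this
  omega

lemma wSlice_append (s : ℕ → A) {i j k : ℕ} (h1 : i ≤ j) (h2 : j ≤ k) :
    wSlice s i j ++ wSlice s j k = wSlice s i k := by
  unfold wSlice
  rw [show k - i = (j - i) + (k - j) by omega, List.range_add, List.map_append, List.map_map]
  congr 1
  apply List.map_congr_left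
  intro n _
  simp only [Function.comp_apply]
  congr 1
  omega

lemma exists_ramsey_factorization [Finite Q] (δ : Q → A → Set Q) (Fs : Set Q) (s : ℕ → A) :
    ∃ t : ℕ → ℕ, StrictMono t ∧
      ∀ i j k l, i < j → k < l →
        Sim δ Fs (wSlice s (t i) (t j)) (wSlice s (t k) (t l)) := by
  obtain ⟨t, ht, e, he⟩ := ramsey_pairs (fun i j => colorOf δ Fs (wSlice s i j))
  exact ⟨t, ht, fun i j k l hij hkl =>
    sim_of_colorOf_eq ((he i j hij).trans (he k l hkl).symm)⟩

lemma flatMap_range_prefix (f : ℕ → List A) {k1 k2 : ℕ} (h : k1 ≤ k2) :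
    (List.range k1).flatMap f <+: (List.range k2).flatMap f := by
  obtain ⟨d, rfl⟩ := Nat.exists_eq_add_of_le h
  rw [List.range_add, List.flatMap_append]
  exact ⟨_, rfl⟩

lemma getElem?_of_prefix {l1 l2 : List A} (h : l1 <+: l2) {n : ℕ} (hn : n < l1.length) :
    l2[n]? = l1[n]? := by
  obtain ⟨r, rfl⟩ := h
  rw [List.getElem?_append_left hn]

open Classical in
lemma prodWord_val (f : ℕ → List A) (n : ℕ) :
    (prodWord f).1 n = if h : ∃ k, n < ((List.range k).flatMap f).length then
      ((List.range h.choose).flatMap f)[n]? else none := rfl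

lemma prodWord_apply_of_lt (f : ℕ → List A) {n k : ℕ}
    (h : n < ((List.range k).flatMap f).length) :
    (prodWord f).1 n = ((List.range k).flatMap f)[n]? := by
  have hex : ∃ k, n < ((List.range k).flatMap f).length := ⟨k, h⟩
  rw [prodWord_val, dif_pos hex]
  rcases le_total hex.choose k with hle | hle
  · exact (getElem?_of_prefix (flatMap_range_prefix f hle) hex.choose_spec).symm
  · exact getElem?_of_prefix (flatMap_range_prefix f hle) h

lemma prodWord_apply_of_none (f : ℕ → List A) {n : ℕ}
    (h : ∀ k, ((List.range k).flatMap f).length ≤ n) : (prodWord f).1 n = none := by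
  rw [prodWord_val, dif_neg]
  push_neg
  exact fun k => h k

/-- Every (possibly infinite) word lies in `CD^ω` for some `(C, D) ∈ 𝓒`. -/
lemma exists_concPair [Finite Q] (δ : Q → A → Set Q) (Fs : Set Q) (w : Word A) :
    ∃ p : CPair δ Fs, w ∈ concPair p := by
  classical
  have stab : ∀ m n, m ≤ n → w.1 m = none → w.1 n = none := by
    intro m n h hm
    induction h with
    | refl => exact hm
    | step _ ih => exact w.2 _ ih
  by_cases hfin : ∃ N, w.1 N = none
  · -- finite word
    set N := Nat.find hfin with hNdef
    have hN : w.1 N = none := Nat.find_spec hfin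
    have hsome : ∀ n, n < N → (w.1 n).isSome :=
      fun n hn => Option.isSome_iff_ne_none.2 (Nat.find_min hfin hn)
    set l : List A := List.pmap (fun n (h : (w.1 n).isSome) => (w.1 n).get h) (List.range N)
      (fun n hn => hsome n (List.mem_range.1 hn)) with hl
    have hlen : l.length = N := by simp [hl]
    set F : ℕ → List A := fun i => if i = 0 then l else [] with hF
    have hflat : ∀ k, (List.range k).flatMap F = if k = 0 then [] else l := by
      intro k
      induction k with
      | zero => simp
      | succ k ih =>
        rw [List.range_succ, List.flatMap_append, ih]
        cases k with
        | zero => simp [hF]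
        | succ k => simp [hF]
    refine ⟨⟨(wordClass δ Fs l, wordClass δ Fs []), ⟨l, rfl⟩, ⟨[], rfl⟩, ?_, ?_⟩, ?_⟩
    · rw [classMul_wordClass, List.append_nil]
    · rw [classMul_wordClass]; rfl
    · refine ⟨F, ?_, ?_, ?_⟩
      · show F 0 ∈ wordClass δ Fs l
        have : F 0 = l := by simp [hF]
        rw [this]
        exact mem_wordClass_self δ Fs l
      · intro i hi
        have : F i = [] := by rw [hF]; simp only; rw [if_neg (by omega)]
        rw [this]
        exact Or.inl ⟨rfl, rfl⟩
      · apply Subtype.ext; funext n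
        by_cases hn : n < N
        · have h1 : n < ((List.range 1).flatMap F).length := by
            rw [hflat]
            simpa [hlen] using hn
          rw [prodWord_apply_of_lt F h1, hflat]
          simp only [if_neg (one_ne_zero)]
          have hn' : n < l.length := by omega
          rw [List.getElem?_eq_getElem hn']
          have : l[n] = (w.1 ((List.range N)[n]'(by simpa using hn))).get
              (hsome _ (List.mem_range.1 (List.getElem_mem _))) := by
            simp only [hl]
            rw [List.getElem_pmap]
          rw [this]
          simp only [List.getElem_range]
          exact (Option.some_get _).symm
        · rw [prodWord_apply_of_none, stab N n (by omega) hN]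
          intro k
          rw [hflat]
          split
          · simp
          · omega
  · -- infinite word
    push_neg at hfin
    have hsome : ∀ n, (w.1 n).isSome := fun n => Option.isSome_iff_ne_none.2 (hfin n)
    set s : ℕ → A := fun n => (w.1 n).get (hsome n) with hs
    have hw : ∀ n, w.1 n = some (s n) := fun n => (Option.some_get (hsome n)).symm
    obtain ⟨t, htm, hsim⟩ := exists_ramsey_factorization δ Fs s
    have htle : ∀ k, k ≤ t k := fun k => htm.le_apply
    have ht1 : 0 < t 1 := lt_of_lt_of_le one_pos (htle 1)
    have hc0 : wSlice s 0 (t 1) ≠ [] := wSlice_ne_nil ht1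
    have hu : wSlice s (t 1) (t 2) ≠ [] := wSlice_ne_nil (htm one_lt_two)
    have hS1 : Sim δ Fs (wSlice s 0 (t 1)) (wSlice s 0 (t 2)) := by
      have e1 := sim_append (sim_refl δ Fs (wSlice s 0 (t 0)))
        (hsim 0 1 0 2 zero_lt_one zero_lt_two)
      rwa [wSlice_append s (Nat.zero_le _) (htm zero_lt_one).le,
        wSlice_append s (Nat.zero_le _) (htm zero_lt_two).le] at e1
    have hS2 : Sim δ Fs (wSlice s (t 1) (t 2) ++ wSlice s (t 1) (t 2)) (wSlice s (t 1) (t 2)) := by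
      have e1 := sim_append (sim_refl δ Fs (wSlice s (t 1) (t 2)))
        (hsim 1 2 2 3 one_lt_two (by omega))
      rw [wSlice_append s (htm one_lt_two).le (htm (by omega : (2:ℕ) < 3)).le] at e1
      exact sim_trans e1 (hsim 1 3 1 2 (by omega) one_lt_two)
    refine ⟨⟨(wordClass δ Fs (wSlice s 0 (t 1)), wordClass δ Fs (wSlice s (t 1) (t 2))),
      ⟨_, rfl⟩, ⟨_, rfl⟩, ?_, ?_⟩, ?_⟩
    · rw [classMul_wordClass, wSlice_append s (Nat.zero_le _) (htm one_lt_two).le]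
      exact wordClass_eq_of_mem (Or.inr ⟨hc0, wSlice_ne_nil (lt_of_lt_of_le ht1 (htm one_lt_two).le), hS1⟩)
    · rw [classMul_wordClass]
      exact wordClass_eq_of_mem (Or.inr ⟨hu,
        fun hc => hu (List.append_eq_nil_iff.1 hc).1, sim_symm hS2⟩)
    · set F : ℕ → List A := fun i => if i = 0 then wSlice s 0 (t 1)
        else wSlice s (t i) (t (i + 1)) with hF
      have hFsucc : ∀ i, i ≠ 0 → F i = wSlice s (t i) (t (i + 1)) := by
        intro i hi
        rw [hF]; simp only; rw [if_neg hi]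
      have hflat : ∀ k, (List.range (k + 1)).flatMap F = wSlice s 0 (t (k + 1)) := by
        intro k
        induction k with
        | zero => simp [List.range_succ, hF]
        | succ k ih =>
          rw [List.range_succ, List.flatMap_append, ih]
          have h2 : [k + 1].flatMap F = wSlice s (t (k + 1)) (t (k + 1 + 1)) := by
            simp [hFsucc (k + 1) (by omega)]
          rw [h2]
          exact wSlice_append s (Nat.zero_le _) (htm (by omega)).le
      refine ⟨F, ?_, ?_, ?_⟩
      · show F 0 ∈ _
        have : F 0 = wSlice s 0 (t 1) := by simp [hF]
        rw [this]
        exact mem_wordClass_self δ Fs _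
      · intro i hi
        rw [hFsucc i (by omega)]
        exact Or.inr ⟨hu, wSlice_ne_nil (htm (Nat.lt_succ_self i)),
          hsim 1 2 i (i + 1) one_lt_two (Nat.lt_succ_self i)⟩
      · apply Subtype.ext; funext n
        have hlen : n < ((List.range (n + 1 + 1)).flatMap F).length := by
          rw [hflat (n + 1), wSlice_length]
          have := htle (n + 1 + 1)
          omega
        rw [hw n, prodWord_apply_of_lt F hlen, hflat]
        have hnt : n < t (n + 1 + 1) := by
          have := htle (n + 1 + 1)
          omega
        simp [wSlice, List.getElem?_map, List.getElem?_range hnt]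

end AuxProofs

/-- `𝔠 ∘ 𝔣` and `𝔤` form a Galois connection: for every language
`V ⊆ Σ^{≤ω}` and every closed `𝒱` (i.e. `𝔣(𝔤(𝒱)) = 𝒱`), `𝔠(𝔣(V)) ⊆ 𝒱 ↔ V ⊆ 𝔤(𝒱)`. -/
theorem frak_galois {Q A : Type*} [Finite Q] [Finite A]
    (δ : Q → A → Set Q) (Fs : Set Q) (V : Set (Word A))
    (𝒱 : Set (CPair δ Fs)) (h𝒱 : frakF δ Fs (frakG 𝒱) = 𝒱) :
    frakC (frakF δ Fs V) ⊆ 𝒱 ↔ V ⊆ frakG 𝒱 := by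
  have hFmono : ∀ (X Y : Set (Word A)), X ⊆ Y → frakF δ Fs X ⊆ frakF δ Fs Y := by
    rintro X Y h p ⟨x, hx1, hx2⟩
    exact ⟨x, hx1, h hx2⟩
  have hGmono : ∀ (X Y : Set (CPair δ Fs)), X ⊆ Y → frakG X ⊆ frakG Y := by
    intro X Y h x hx
    obtain ⟨p, hp, hxp⟩ := Set.mem_iUnion₂.1 hx
    exact Set.mem_iUnion₂.2 ⟨p, h hp, hxp⟩
  constructor
  · intro h v hv
    obtain ⟨p, hp⟩ := exists_concPair δ Fs v
    have h1 : p ∈ frakF δ Fs V := ⟨v, hp, hv⟩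
    have h2 : p ∈ frakF δ Fs (frakG (frakF δ Fs V)) :=
      ⟨v, hp, Set.mem_iUnion₂.2 ⟨p, h1, hp⟩⟩
    have h3 : p ∈ frakC (frakF δ Fs V) := by
      rw [frakC]
      exact Set.mem_iUnion.2 ⟨0, by simpa using h2⟩
    exact Set.mem_iUnion₂.2 ⟨p, h h3, hp⟩
  · intro h p hp
    have hbase : frakF δ Fs V ⊆ 𝒱 := by
      rw [← h𝒱]
      exact hFmono _ _ h
    have hiter : ∀ n, (fun 𝒲 => frakF δ Fs (frakG 𝒲))^[n] (frakF δ Fs V) ⊆ 𝒱 := by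
      intro n
      induction n with
      | zero => exact hbase
      | succ n ih =>
        rw [Function.iterate_succ_apply']
        intro q hq
        rw [← h𝒱]
        exact hFmono _ _ (hGmono _ _ ih) hq
    rw [frakC] at hp
    obtain ⟨n, hn⟩ := Set.mem_iUnion.1 hp
    exact hiter (n + 1) hn
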